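/- If {Λ_i} is a g-frame for a finite-dimensional Hilbert space H with g-frame operator S whose eigenvalues (with multiplicity) are λ_1,…,λ_n, then ∑_i ‖Λ_i − Λ_i S^{-1/2}‖_F² = ∑_{k=1}^n (√λ_k − 1)² and ∑_i ‖Λ_i − Λ_i S^{-1}‖_F² = ∑_{k=1}^n (λ_k − 1)²/λ_k. -/

import Mathlib

open scoped InnerProductSpace ComplexConjugate

/-- The Hilbert–Schmidt norm squared `‖T‖_F²` of an operator on a finite-dimensional
Hilbert space. -/
noncomputable def hsNormSq {H K : Type*} [NormedAddCommGroup H] [InnerProductSpace ℂ H]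
    [FiniteDimensional ℂ H] [NormedAddCommGroup K] [InnerProductSpace ℂ K]
    (T : H →L[ℂ] K) : ℝ :=
  ∑ k, ‖T (stdOrthonormalBasis ℂ H k)‖ ^ 2

section aux

variable {H K : Type*} [NormedAddCommGroup H] [InnerProductSpace ℂ H] [FiniteDimensional ℂ H]
  [NormedAddCommGroup K] [InnerProductSpace ℂ K] [CompleteSpace K]

lemma gframe_parseval {n : ℕ} (b : OrthonormalBasis (Fin n) ℂ H) (x : H) :
    ∑ k, ‖⟪b k, x⟫_ℂ‖ ^ 2 = ‖x‖ ^ 2 := by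
  simp_rw [← b.repr_apply_apply]
  rw [← b.repr.norm_map x, EuclideanSpace.norm_eq]
  rw [Real.sq_sqrt (by positivity)]

lemma gframe_quadratic (S : H →L[ℂ] H) {n : ℕ} (e : OrthonormalBasis (Fin n) ℂ H)
    (lam : Fin n → ℝ) (heig : ∀ k, S (e k) = (lam k : ℂ) • e k) (y : H) :
    Complex.re ⟪y, S y⟫_ℂ = ∑ j, lam j * ‖⟪e j, y⟫_ℂ‖ ^ 2 := by
  have hSy : S y = ∑ j, (⟪e j, y⟫_ℂ * lam j) • e j := by
    conv_lhs => rw [← e.sum_repr' y, map_sum]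
    simp only [map_smul, heig, smul_smul]
  rw [hSy, inner_sum]
  simp only [inner_smul_right]
  rw [Complex.re_sum]
  congr 1; ext j
  have h : ⟪y, e j⟫_ℂ = conj ⟪e j, y⟫_ℂ := (inner_conj_symm y (e j)).symm
  rw [h]
  generalize ⟪e j, y⟫_ℂ = w
  simp [Complex.mul_re, Complex.sq_norm, Complex.normSq_apply]
  ring

lemma gframe_spectrum_subset (S : H →L[ℂ] H) (hSA : IsSelfAdjoint S) {n : ℕ}
    (e : OrthonormalBasis (Fin n) ℂ H) (lam : Fin n → ℝ)
    (heig : ∀ k, S (e k) = (lam k : ℂ) • e k) :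
    spectrum ℝ S ⊆ Set.range lam := by
  have : CompleteSpace H := FiniteDimensional.complete ℂ H
  have hsym := ContinuousLinearMap.isSelfAdjoint_iff_isSymmetric.mp hSA
  intro μ hμ
  by_contra hne
  rw [Set.mem_range] at hne; push_neg at hne
  rw [spectrum.mem_iff] at hμ
  apply hμ
  rw [ContinuousLinearMap.isUnit_iff_bijective]
  set T : H →L[ℂ] H := algebraMap ℝ (H →L[ℂ] H) μ - S with hT
  have hker : ∀ x, T x = 0 → x = 0 := by
    intro x hx
    have hSx : S x = (μ : ℂ) • x := by
      have h0 : (algebraMap ℝ (H →L[ℂ] H) μ) x - S x = 0 := by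
        simpa [hT] using hx
      have h2 : (algebraMap ℝ (H →L[ℂ] H) μ) x = (μ : ℂ) • x := by
        simp [Algebra.algebraMap_eq_smul_one, Complex.coe_smul]
      rw [h2] at h0
      linear_combination (norm := module) -h0
    have hc : ∀ k, ⟪e k, x⟫_ℂ = 0 := by
      intro k
      have h1 : ⟪S (e k), x⟫_ℂ = ⟪e k, S x⟫_ℂ := hsym (e k) x
      rw [heig, hSx, inner_smul_left, inner_smul_right] at h1
      have hμk : (lam k : ℂ) ≠ (μ : ℂ) := by simpa using hne k
      simp only [Complex.conj_ofReal] at h1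
      have h3 := sub_eq_zero.mpr h1
      rw [← sub_mul] at h3
      rcases mul_eq_zero.mp h3 with h | h
      · exact absurd (sub_eq_zero.mp h) hμk
      · exact h
    have h4 := e.sum_repr' x
    simp only [hc, zero_smul, Finset.sum_const_zero] at h4
    exact h4.symm
  have hinj : Function.Injective T := by
    intro a b hab
    exact sub_eq_zero.mp (hker _ (by rw [map_sub, hab, sub_self]))
  exact ⟨hinj, LinearMap.injective_iff_surjective (f := (T : H →ₗ[ℂ] H)) |>.mp hinj⟩

lemma gframe_cfc_eigen (S : H →L[ℂ] H) (hSA : IsSelfAdjoint S) {n : ℕ}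
    (e : OrthonormalBasis (Fin n) ℂ H) (lam : Fin n → ℝ)
    (heig : ∀ k, S (e k) = (lam k : ℂ) • e k)
    (hspec : spectrum ℝ S ⊆ Set.range lam)
    (f : ℝ → ℝ) (k : Fin n) :
    cfc f S (e k) = ((f (lam k) : ℂ)) • e k := by
  have : CompleteSpace H := FiniteDimensional.complete ℂ H
  have hpow : ∀ (m : ℕ) (j : Fin n), (S ^ m) (e j) = ((lam j : ℂ) ^ m) • e j := by
    intro m j
    induction m with
    | zero => simp
    | succ m ih =>
      rw [pow_succ, ContinuousLinearMap.mul_apply, heig, map_smul, ih, smul_smul, pow_succ]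
      ring_nf
  have haeval : ∀ (p : Polynomial ℝ) (j : Fin n),
      (Polynomial.aeval S p) (e j) = (((p.eval (lam j) : ℝ) : ℂ)) • e j := by
    intro p j
    rw [Polynomial.aeval_eq_sum_range, Polynomial.eval_eq_sum_range]
    rw [ContinuousLinearMap.sum_apply]
    push_cast
    rw [Finset.sum_smul]
    congr 1; ext m
    simp only [ContinuousLinearMap.coe_smul', Pi.smul_apply, hpow]
    have hit : (⇑S)^[m] (e j) = (S ^ m) (e j) := by
      induction m with
      | zero => rfl
      | succ m ih => rw [pow_succ', ContinuousLinearMap.mul_apply, ← ih, Function.iterate_succ_apply']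
    rw [hit, hpow, ← Complex.coe_smul, smul_smul]
  set s : Finset ℝ := Finset.image lam Finset.univ with hs
  set p : Polynomial ℝ := Lagrange.interpolate s id f with hp
  have hpe : ∀ j : Fin n, p.eval (lam j) = f (lam j) := by
    intro j
    have hmem : lam j ∈ s := Finset.mem_image_of_mem lam (Finset.mem_univ j)
    exact Lagrange.eval_interpolate_at_node (r := f) (Set.injOn_id _) hmem
  have hcongr : cfc f S = cfc p.eval S := by
    apply cfc_congr
    intro x hx
    obtain ⟨j, rfl⟩ := hspec hx
    exact (hpe j).symm
  rw [hcongr, cfc_polynomial p S hSA, haeval, hpe]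

lemma gframe_key {I : Type*} (Λ : I → (H →L[ℂ] K)) (S : H →L[ℂ] H)
    (hS : ∀ x : H, HasSum (fun i => (Λ i).adjoint (Λ i x)) (S x))
    {n : ℕ} (e : OrthonormalBasis (Fin n) ℂ H) (lam : Fin n → ℝ)
    (heig : ∀ k, S (e k) = (lam k : ℂ) • e k)
    (N : H →L[ℂ] H) (hN : IsSelfAdjoint N) (g : Fin n → ℝ)
    (hNe : ∀ k, N (e k) = ((g k : ℝ) : ℂ) • e k) :
    ∑' i, hsNormSq (Λ i - (Λ i) ∘L N) = ∑ j, lam j * (1 - g j) ^ 2 := by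
  have : CompleteSpace H := FiniteDimensional.complete ℂ H
  have hNsym := ContinuousLinearMap.isSelfAdjoint_iff_isSymmetric.mp hN
  have hInner : ∀ x y : H, HasSum (fun i => (⟪Λ i y, Λ i x⟫_ℂ)) ⟪y, S x⟫_ℂ := by
    intro x y
    have h := (hS x).mapL (innerSL ℂ y)
    simpa [ContinuousLinearMap.adjoint_inner_right] using h
  have hQ : ∀ y : H, HasSum (fun i => ‖Λ i y‖ ^ 2) (Complex.re ⟪y, S y⟫_ℂ) := by
    intro y
    have h := (hInner y y).mapL (Complex.reCLM)
    have h2 : ∀ z : K, (⟪z, z⟫_ℂ).re = ‖z‖ ^ 2 := fun z => inner_self_eq_norm_sq (𝕜 := ℂ) z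
    simpa only [Complex.reCLM_apply, h2] using h
  set b := stdOrthonormalBasis ℂ H with hb
  have happly : ∀ (i : I) (x : H), (Λ i - (Λ i) ∘L N) x = Λ i (x - N x) := by
    intro i x; simp [map_sub]
  have hHas : HasSum (fun i => hsNormSq (Λ i - (Λ i) ∘L N))
      (∑ k, Complex.re ⟪b k - N (b k), S (b k - N (b k))⟫_ℂ) := by
    unfold hsNormSq
    exact hasSum_sum fun k _ => by simpa [happly] using hQ (b k - N (b k))
  rw [hHas.tsum_eq]
  have hinner_eig : ∀ (j : Fin n) (x : H),
      ⟪e j, x - N x⟫_ℂ = ((1 - g j : ℝ) : ℂ) * ⟪e j, x⟫_ℂ := by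
    intro j x
    rw [inner_sub_right, ← ContinuousLinearMap.adjoint_inner_left, hN.adjoint_eq, hNe,
      inner_smul_left, Complex.conj_ofReal]
    push_cast
    ring
  calc ∑ k, Complex.re ⟪b k - N (b k), S (b k - N (b k))⟫_ℂ
      = ∑ k, ∑ j, lam j * ((1 - g j) ^ 2 * ‖⟪e j, b k⟫_ℂ‖ ^ 2) := by
        refine Finset.sum_congr rfl fun k _ => ?_
        rw [gframe_quadratic S e lam heig]
        refine Finset.sum_congr rfl fun j _ => ?_
        rw [hinner_eig, norm_mul, mul_pow, Complex.norm_real, ← sq_abs]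
        norm_num
    _ = ∑ j, lam j * (1 - g j) ^ 2 := by
        rw [Finset.sum_comm]
        refine Finset.sum_congr rfl fun j _ => ?_
        rw [← Finset.mul_sum]
        simp_rw [← Finset.mul_sum]
        have hp : ∑ k, ‖⟪e j, b k⟫_ℂ‖ ^ 2 = 1 := by
          have h1 : ∀ k, ‖⟪e j, b k⟫_ℂ‖ = ‖⟪b k, e j⟫_ℂ‖ := fun k => norm_inner_symm _ _
          simp_rw [h1]
          rw [gframe_parseval b (e j), e.orthonormal.1 j]
          norm_num
        rw [hp, mul_one]

lemma gframe_selfadjoint {I : Type*} (Λ : I → (H →L[ℂ] K)) (S : H →L[ℂ] H)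
    (hS : ∀ x : H, HasSum (fun i => (Λ i).adjoint (Λ i x)) (S x)) :
    IsSelfAdjoint S := by
  have : CompleteSpace H := FiniteDimensional.complete ℂ H
  have hInner : ∀ x y : H, HasSum (fun i => (⟪Λ i y, Λ i x⟫_ℂ)) ⟪y, S x⟫_ℂ := by
    intro x y
    have h := (hS x).mapL (innerSL ℂ y)
    simpa [ContinuousLinearMap.adjoint_inner_right] using h
  rw [ContinuousLinearMap.isSelfAdjoint_iff_isSymmetric]
  intro x y
  have h1 : HasSum (fun i => conj (⟪Λ i y, Λ i x⟫_ℂ)) (conj ⟪y, S x⟫_ℂ) :=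
    (hInner x y).mapL (Complex.conjCLE.toContinuousLinearMap)
  simp only [inner_conj_symm] at h1
  exact h1.tsum_eq.symm.trans (hInner y x).tsum_eq

end aux

/-- For a g-frame `{Λ i}` on a finite-dimensional Hilbert space whose frame operator `S`
has orthonormal eigenbasis `{e k}` with eigenvalues `{λ k}`:
`∑ i ‖Λ i − Λ i S^{-1/2}‖_F² = ∑ k (√λ k − 1)²` and
`∑ i ‖Λ i − Λ i S⁻¹‖_F² = ∑ k (λ k − 1)²/λ k`. -/
theorem gframe_dist_eq_eigenvalue_sums
    {H K : Type*} [NormedAddCommGroup H] [InnerProductSpace ℂ H] [FiniteDimensional ℂ H]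
    [NormedAddCommGroup K] [InnerProductSpace ℂ K] [CompleteSpace K]
    {I : Type*} (Λ : I → (H →L[ℂ] K)) (S : H →L[ℂ] H)
    (A B : ℝ) (hA : 0 < A) (hB : 0 < B)
    (hsum : ∀ x : H, Summable fun i => ‖Λ i x‖ ^ 2)
    (hlow : ∀ x : H, A * ‖x‖ ^ 2 ≤ ∑' i, ‖Λ i x‖ ^ 2)
    (hup : ∀ x : H, ∑' i, ‖Λ i x‖ ^ 2 ≤ B * ‖x‖ ^ 2)
    (hS : ∀ x : H, HasSum (fun i => (Λ i).adjoint (Λ i x)) (S x))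
    (n : ℕ) (e : OrthonormalBasis (Fin n) ℂ H) (lam : Fin n → ℝ)
    (hlam : ∀ k, 0 < lam k) (heig : ∀ k, S (e k) = (lam k : ℂ) • e k) :
    (∑' i, hsNormSq (Λ i - (Λ i) ∘L cfc (fun t : ℝ => t ^ (-(1/2 : ℝ))) S)
        = ∑ k, (Real.sqrt (lam k) - 1) ^ 2) ∧
    (∑' i, hsNormSq (Λ i - (Λ i) ∘L cfc (fun t : ℝ => t⁻¹) S)
        = ∑ k, (lam k - 1) ^ 2 / lam k) := by
  have : CompleteSpace H := FiniteDimensional.complete ℂ H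
  have hSA : IsSelfAdjoint S := gframe_selfadjoint Λ S hS
  have hspec : spectrum ℝ S ⊆ Set.range lam := gframe_spectrum_subset S hSA e lam heig
  constructor
  · set f : ℝ → ℝ := fun t => t ^ (-(1/2 : ℝ)) with hf
    have hkey := gframe_key Λ S hS e lam heig (cfc f S) (cfc_predicate f S)
      (fun k => f (lam k)) (fun k => gframe_cfc_eigen S hSA e lam heig hspec f k)
    rw [hkey]
    refine Finset.sum_congr rfl fun j _ => ?_
    have hl := hlam j
    have hsq : Real.sqrt (lam j) * Real.sqrt (lam j) = lam j := Real.mul_self_sqrt hl.le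
    have hspos : 0 < Real.sqrt (lam j) := Real.sqrt_pos.mpr hl
    simp only [hf]
    rw [Real.rpow_neg hl.le, ← Real.sqrt_eq_rpow]
    field_simp
    rw [Real.sq_sqrt hl.le]
  · set f : ℝ → ℝ := fun t => t⁻¹ with hf
    have hkey := gframe_key Λ S hS e lam heig (cfc f S) (cfc_predicate f S)
      (fun k => f (lam k)) (fun k => gframe_cfc_eigen S hSA e lam heig hspec f k)
    rw [hkey]
    refine Finset.sum_congr rfl fun j _ => ?_
    have hl := hlam j
    have hne : lam j ≠ 0 := hl.ne'
    simp only [hf]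
    field_simp
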